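/- Let n ≥ 1, let σ > 0 and B ≥ 0 satisfy B² < 4σ, and let b ∈ ℝⁿ with |b| ≤ B. Define γ := 4σ/(|b|² + 4σ) and η := (4σ − B²)/(4σ + B²). Then for all d ∈ ℝ, q ∈ ℝⁿ, and u ∈ ℝ, ( (1 − γ) d − γ (b·q) − (1 − γ) σ u )² ≤ (1 − η) ( d² + 2σ |q|² + σ² u² ). -/

import Mathlib

noncomputable section
set_option maxHeartbeats 1000000

/-- Let `σ > 0` and `B ≥ 0` with `B² < 4σ`, and `b ∈ ℝⁿ` with
`|b| ≤ B`. With `γ = 4σ/(|b|² + 4σ)` and `η = (4σ - B²)/(4σ + B²)`, for all `d ∈ ℝ`,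
`q ∈ ℝⁿ`, `u ∈ ℝ`:
`((1-γ)d - γ(b·q) - (1-γ)σu)² ≤ (1-η)(d² + 2σ|q|² + σ²u²)`. -/
theorem statement15
    (n : ℕ) (hn : 0 < n) (σ B : ℝ) (hσ : 0 < σ) (hB : 0 ≤ B) (hBσ : B ^ 2 < 4 * σ)
    (b : EuclideanSpace ℝ (Fin n)) (hb : ‖b‖ ≤ B)
    (γ η : ℝ)
    (hγ : γ = 4 * σ / (‖b‖ ^ 2 + 4 * σ))
    (hη : η = (4 * σ - B ^ 2) / (4 * σ + B ^ 2)) :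
    ∀ (d : ℝ) (q : EuclideanSpace ℝ (Fin n)) (u : ℝ),
      ((1 - γ) * d - γ * (inner ℝ b q : ℝ) - (1 - γ) * σ * u) ^ 2
        ≤ (1 - η) * (d ^ 2 + 2 * σ * ‖q‖ ^ 2 + σ ^ 2 * u ^ 2) := by
  intro d q u
  set β := ‖b‖ with hβdef
  set Q := ‖q‖ with hQdef
  set s : ℝ := inner ℝ b q with hsdef
  have hβ0 : 0 ≤ β := norm_nonneg b
  have hQ0 : 0 ≤ Q := norm_nonneg q
  have hs : s ^ 2 ≤ β ^ 2 * Q ^ 2 := by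
    have := abs_real_inner_le_norm b q
    nlinarith [abs_nonneg s, sq_abs s, this]
  have hβB : β ≤ B := hb
  have hD : (0:ℝ) < β ^ 2 + 4 * σ := by nlinarith
  have hD' : (0:ℝ) < B ^ 2 + 4 * σ := by nlinarith
  have hRHS0 : 0 ≤ d ^ 2 + 2 * σ * Q ^ 2 + σ ^ 2 * u ^ 2 := by positivity
  -- Step 1: Cauchy–Schwarz / Cordes step
  have h1 : ((1 - γ) * d - γ * s - (1 - γ) * σ * u) ^ 2
      ≤ (2 - 2 * γ) * (d ^ 2 + 2 * σ * Q ^ 2 + σ ^ 2 * u ^ 2) := by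
    have h1γ : 1 - γ = β ^ 2 / (β ^ 2 + 4 * σ) := by
      rw [hγ]; field_simp; ring
    have h2γ : 2 - 2 * γ = 2 * β ^ 2 / (β ^ 2 + 4 * σ) := by
      rw [hγ]; field_simp; ring
    have e1 : (1 - γ) * d - γ * s - (1 - γ) * σ * u
        = (β ^ 2 * d - 4 * σ * s - β ^ 2 * σ * u) / (β ^ 2 + 4 * σ) := by
      rw [h1γ, hγ]; field_simp
    have key : (β ^ 2 * d - 4 * σ * s - β ^ 2 * σ * u) ^ 2
        ≤ (2 * β ^ 2 * (d ^ 2 + 2 * σ * Q ^ 2 + σ ^ 2 * u ^ 2)) * (β ^ 2 + 4 * σ) := by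
      have hss : (0:ℝ) ≤ β ^ 2 * Q ^ 2 - s ^ 2 := by linarith
      nlinarith [mul_nonneg (sq_nonneg β) (sq_nonneg (d + σ * u)),
        mul_nonneg (mul_nonneg hσ.le (sq_nonneg β)) (sq_nonneg (s + 2 * d)),
        mul_nonneg (mul_nonneg hσ.le (sq_nonneg β)) (sq_nonneg (s - 2 * σ * u)),
        mul_nonneg (mul_nonneg hσ.le (sq_nonneg β)) hss,
        mul_nonneg (mul_nonneg hσ.le hσ.le) hss]
    rw [e1, h2γ, div_pow, div_mul_eq_mul_div, div_le_div_iff₀ (by positivity) hD]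
    linarith [mul_le_mul_of_nonneg_right key hD.le, sq_nonneg (β ^ 2 + 4 * σ)]

  -- Step 2: (2 - 2γ) ≤ 1 - η
  have h2 : 2 - 2 * γ ≤ 1 - η := by
    have h1η : 1 - η = 2 * B ^ 2 / (B ^ 2 + 4 * σ) := by
      rw [hη]; field_simp; ring
    have h2γ : 2 - 2 * γ = 2 * β ^ 2 / (β ^ 2 + 4 * σ) := by
      rw [hγ]; field_simp; ring
    rw [h1η, h2γ, div_le_div_iff₀ hD hD']
    nlinarith [hβB, hβ0, hσ, mul_le_mul hβB hβB hβ0 hB]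
  calc ((1 - γ) * d - γ * s - (1 - γ) * σ * u) ^ 2
      ≤ (2 - 2 * γ) * (d ^ 2 + 2 * σ * Q ^ 2 + σ ^ 2 * u ^ 2) := h1
    _ ≤ (1 - η) * (d ^ 2 + 2 * σ * Q ^ 2 + σ ^ 2 * u ^ 2) := by
        apply mul_le_mul_of_nonneg_right h2 hRHS0
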